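/- Let A ∈ GL₂ℤ. The group G_A = ℤ² ⋊_A ℤ is generated by two elements if and only if there exists a vector v ∈ ℤ² such that ℤv + ℤ(Av) = ℤ². -/

import Mathlib

open Matrix

abbrev GL2Z := GL (Fin 2) ℤ

/-- The automorphism of `ℤ²` induced by `A ∈ GL₂ℤ`. -/
def glToAddAut (A : GL2Z) : (Fin 2 → ℤ) ≃+ (Fin 2 → ℤ) :=
  (Matrix.GeneralLinearGroup.toLin A).toLinearEquiv.toAddEquiv

/-- The action of `ℤ` on `ℤ²` with `1` acting as `A`. -/
def phiA (A : GL2Z) : Multiplicative ℤ →* MulAut (Multiplicative (Fin 2 → ℤ)) :=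
  zpowersHom _ (AddEquiv.toMultiplicative (glToAddAut A))

/-- `G_A = ℤ² ⋊_A ℤ`. -/
abbrev GA (A : GL2Z) := (Multiplicative (Fin 2 → ℤ)) ⋊[phiA A] (Multiplicative ℤ)


lemma sq_eq (B : Matrix (Fin 2) (Fin 2) ℤ) : B * B = B.trace • B - B.det • 1 := by
  ext i j
  simp only [Matrix.mul_apply, Fin.sum_univ_two, Matrix.trace_fin_two, Matrix.det_fin_two,
    Matrix.sub_apply, Matrix.smul_apply, Matrix.one_apply, smul_eq_mul]
  fin_cases i <;> fin_cases j <;> norm_num <;> ring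

lemma mulVec_sq (B : Matrix (Fin 2) (Fin 2) ℤ) (u : Fin 2 → ℤ) :
    B.mulVec (B.mulVec u) = B.trace • B.mulVec u - B.det • u := by
  rw [Matrix.mulVec_mulVec, sq_eq, Matrix.sub_mulVec, Matrix.smul_mulVec,
    Matrix.smul_mulVec, Matrix.one_mulVec]

lemma det_mul_det (A : GL2Z) :
    (A : Matrix (Fin 2) (Fin 2) ℤ).det * (A : Matrix (Fin 2) (Fin 2) ℤ).det = 1 := by
  rcases Int.isUnit_iff.mp ((Matrix.isUnit_iff_isUnit_det _).mp (Units.isUnit A)) with h | h <;>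
    rw [h] <;> ring

lemma inv_mulVec (A : GL2Z) (u : Fin 2 → ℤ) :
    ((A⁻¹ : GL2Z) : Matrix (Fin 2) (Fin 2) ℤ).mulVec u =
      (A : Matrix (Fin 2) (Fin 2) ℤ).det •
        ((A : Matrix (Fin 2) (Fin 2) ℤ).trace • u - (A : Matrix (Fin 2) (Fin 2) ℤ).mulVec u) := by
  set B := (A : Matrix (Fin 2) (Fin 2) ℤ)
  have h1 : ((A⁻¹ : GL2Z) : Matrix (Fin 2) (Fin 2) ℤ) * B = 1 := by
    exact_mod_cast A.inv_mul
  have h2 : B.mulVec (B.det • (B.trace • u - B.mulVec u)) = u := by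
    rw [Matrix.mulVec_smul, Matrix.mulVec_sub, Matrix.mulVec_smul, mulVec_sq, sub_sub_cancel,
      smul_smul, det_mul_det, one_smul]
  calc ((A⁻¹ : GL2Z) : Matrix (Fin 2) (Fin 2) ℤ).mulVec u
      = ((A⁻¹ : GL2Z) : Matrix (Fin 2) (Fin 2) ℤ).mulVec
          (B.mulVec (B.det • (B.trace • u - B.mulVec u))) := by rw [h2]
    _ = _ := by rw [Matrix.mulVec_mulVec, h1, Matrix.one_mulVec]

noncomputable def SpanWA (A : GL2Z) (w : Fin 2 → ℤ) : Submodule ℤ (Fin 2 → ℤ) :=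
  Submodule.span ℤ ({w, (A : Matrix (Fin 2) (Fin 2) ℤ).mulVec w} : Set (Fin 2 → ℤ))

section Span
variable (A : GL2Z) (w : Fin 2 → ℤ)

lemma mem_span_mulVec {u : Fin 2 → ℤ} (hu : u ∈ SpanWA A w) :
    (A : Matrix (Fin 2) (Fin 2) ℤ).mulVec u ∈ SpanWA A w := by
  have : Submodule.map ((A : Matrix (Fin 2) (Fin 2) ℤ).mulVecLin) (SpanWA A w) ≤ SpanWA A w := by
    rw [SpanWA, Submodule.map_span_le]
    rintro m (rfl | rfl)
    · exact Submodule.subset_span (Or.inr rfl)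
    · rw [Matrix.mulVecLin_apply, mulVec_sq]
      exact sub_mem (Submodule.smul_mem _ _ (Submodule.subset_span (Or.inr rfl)))
        (Submodule.smul_mem _ _ (Submodule.subset_span (Or.inl rfl)))
  exact this ⟨u, hu, rfl⟩

lemma mem_span_invMulVec {u : Fin 2 → ℤ} (hu : u ∈ SpanWA A w) :
    ((A⁻¹ : GL2Z) : Matrix (Fin 2) (Fin 2) ℤ).mulVec u ∈ SpanWA A w := by
  rw [inv_mulVec]
  exact Submodule.smul_mem _ _ (sub_mem (Submodule.smul_mem _ _ hu) (mem_span_mulVec A w hu))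

lemma F_apply (u : Fin 2 → ℤ) :
    (AddEquiv.toMultiplicative (glToAddAut A)) (Multiplicative.ofAdd u)
      = Multiplicative.ofAdd ((A : Matrix (Fin 2) (Fin 2) ℤ).mulVec u) := rfl

lemma F_inv_apply (u : Fin 2 → ℤ) :
    (AddEquiv.toMultiplicative (glToAddAut A))⁻¹ (Multiplicative.ofAdd u)
      = Multiplicative.ofAdd (((A⁻¹ : GL2Z) : Matrix (Fin 2) (Fin 2) ℤ).mulVec u) := rfl

lemma mem_span_zpow : ∀ (k : ℤ) (u : Fin 2 → ℤ), u ∈ SpanWA A w →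
    Multiplicative.toAdd (((AddEquiv.toMultiplicative (glToAddAut A)) ^ k)
      (Multiplicative.ofAdd u)) ∈ SpanWA A w := by
  intro k
  induction k using Int.induction_on with
  | zero => intro u hu; simpa using hu
  | succ k ih =>
      intro u hu
      have h : ((AddEquiv.toMultiplicative (glToAddAut A)) ^ ((k : ℤ) + 1))
          (Multiplicative.ofAdd u)
          = ((AddEquiv.toMultiplicative (glToAddAut A)) ^ (k : ℤ))
              ((AddEquiv.toMultiplicative (glToAddAut A)) (Multiplicative.ofAdd u)) := by
        rw [_root_.zpow_add_one]; rfl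
      rw [h, F_apply]
      exact ih _ (mem_span_mulVec A w hu)
  | pred k ih =>
      intro u hu
      have h : ((AddEquiv.toMultiplicative (glToAddAut A)) ^ (-(k : ℤ) - 1))
          (Multiplicative.ofAdd u)
          = ((AddEquiv.toMultiplicative (glToAddAut A)) ^ (-(k : ℤ)))
              ((AddEquiv.toMultiplicative (glToAddAut A))⁻¹ (Multiplicative.ofAdd u)) := by
        rw [_root_.zpow_sub_one]; rfl
      rw [h, F_inv_apply]
      exact ih _ (mem_span_invMulVec A w hu)

end Span

open SemidirectProduct Multiplicative

lemma phiA_apply (A : GL2Z) (k : ℤ) (z : Multiplicative (Fin 2 → ℤ)) :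
    phiA A (ofAdd k) z = ((AddEquiv.toMultiplicative (glToAddAut A)) ^ k) z := by
  simp [phiA]

lemma conj_inl (A : GL2Z) (g : GA A) (c : Multiplicative (Fin 2 → ℤ)) :
    g * inl c * g⁻¹ = inl (phiA A g.right c) := by
  ext
  · simp [mul_comm]
  · simp

lemma ofAdd_one_zpow (k : ℤ) : (ofAdd (1 : ℤ)) ^ k = ofAdd k := by
  rw [← ofAdd_zsmul, smul_eq_mul, mul_one]

lemma rightHom_x_zpow (A : GL2Z) (x : GA A) (hx : rightHom x = ofAdd (1 : ℤ)) (k : ℤ) :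
    (x ^ k).right = ofAdd k := by
  have : rightHom (x ^ k) = (rightHom x) ^ k := map_zpow _ _ _
  rw [hx, ofAdd_one_zpow] at this
  exact this

lemma conj_x_zpow (A : GL2Z) (x : GA A) (hx : rightHom x = ofAdd (1 : ℤ)) (k : ℤ)
    (u : Fin 2 → ℤ) :
    x ^ k * inl (ofAdd u) * (x ^ k)⁻¹
      = inl (((AddEquiv.toMultiplicative (glToAddAut A)) ^ k) (ofAdd u)) := by
  rw [conj_inl, rightHom_x_zpow A x hx, phiA_apply]

lemma core (A : GL2Z) (x y : GA A)
    (hx : rightHom x = ofAdd (1 : ℤ)) (hy : rightHom y = 1)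
    (h : Subgroup.closure ({x, y} : Set (GA A)) = ⊤) :
    SpanWA A (toAdd y.left) = ⊤ := by
  set w := toAdd y.left with hw
  set F := AddEquiv.toMultiplicative (glToAddAut A) with hF
  let K : Subgroup (GA A) :=
  { carrier := {g | ∃ u ∈ SpanWA A w, g = inl (ofAdd u) * x ^ (toAdd (rightHom g))}
    one_mem' := ⟨0, zero_mem _, by simp⟩
    mul_mem' := by
      rintro a b ⟨u, hu, ha⟩ ⟨u', hu', hb⟩
      set p := toAdd (rightHom a) with hp
      set q := toAdd (rightHom b) with hq
      refine ⟨u + toAdd ((F ^ p) (ofAdd u')),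
        add_mem hu (mem_span_zpow A w _ _ hu'), ?_⟩
      have hr : toAdd (rightHom (a * b)) = p + q := by
        rw [_root_.map_mul, toAdd_mul]
      calc a * b
          = inl (ofAdd u) * (x ^ p * inl (ofAdd u') * (x ^ p)⁻¹) * (x ^ p * x ^ q) := by
            rw [show a * b = (inl (ofAdd u) * x ^ p) * (inl (ofAdd u') * x ^ q) from by
              rw [← ha, ← hb]]
            group
        _ = inl (ofAdd u) * inl ((F ^ p) (ofAdd u')) * (x ^ p * x ^ q) := by
            rw [conj_x_zpow A x hx, hF]
        _ = inl (ofAdd (u + toAdd ((F ^ p) (ofAdd u')))) * x ^ (toAdd (rightHom (a * b))) := by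
            rw [← _root_.map_mul, hr, ← _root_.zpow_add]
            rfl
    inv_mem' := by
      rintro a ⟨u, hu, ha⟩
      set p := toAdd (rightHom a) with hp
      refine ⟨toAdd ((F ^ (-p)) (ofAdd (-u))),
        mem_span_zpow A w _ _ (neg_mem hu), ?_⟩
      have hr : toAdd (rightHom a⁻¹) = -p := by
        rw [map_inv, toAdd_inv]
      have hinv : (inl (ofAdd u) : GA A)⁻¹ = inl (ofAdd (-u)) := by
        rw [← _root_.map_inv]; rfl
      calc a⁻¹
          = (x ^ (-p) * inl (ofAdd (-u)) * (x ^ (-p))⁻¹) * x ^ (-p) := by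
            rw [show a⁻¹ = (inl (ofAdd u) * x ^ p)⁻¹ from by rw [← ha], ← hinv]
            group
        _ = inl ((F ^ (-p)) (ofAdd (-u))) * x ^ (toAdd (rightHom a⁻¹)) := by
            rw [conj_x_zpow A x hx, hF, hr]
        _ = _ := by rw [ofAdd_toAdd] }
  have hxK : x ∈ K := ⟨0, zero_mem _, by simp [hx]⟩
  have hyK : y ∈ K := by
    refine ⟨w, Submodule.subset_span (Or.inl rfl), ?_⟩
    have hyr : y.right = 1 := hy
    rw [hw, ofAdd_toAdd, hy]
    simp only [toAdd_one, zpow_zero, mul_one]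
    conv_lhs => rw [← inl_left_mul_inr_right y, hyr]
    simp
  have hK : ∀ g : GA A, g ∈ K := by
    intro g
    have : Subgroup.closure ({x, y} : Set (GA A)) ≤ K := by
      rw [Subgroup.closure_le]
      rintro g (rfl | rfl) <;> assumption
    rw [h] at this
    exact this trivial
  rw [eq_top_iff]
  rintro u -
  obtain ⟨u', hu', heq⟩ := hK (inl (ofAdd u))
  rw [rightHom_inl] at heq
  simp only [toAdd_one, zpow_zero, mul_one, inl_inj] at heq
  rwa [show u = u' from ofAdd.injective heq]

section Nielsen
variable {G : Type*} [Group G]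

lemma cl_pair_swap (x y : G) :
    Subgroup.closure ({y, x} : Set G) = Subgroup.closure ({x, y} : Set G) := by
  rw [Set.pair_comm]

lemma cl_pair_inv (x y : G) :
    Subgroup.closure ({x⁻¹, y} : Set G) = Subgroup.closure ({x, y} : Set G) := by
  apply le_antisymm <;> rw [Subgroup.closure_le] <;> rintro g (rfl | rfl)
  · exact inv_mem (Subgroup.subset_closure (Or.inl rfl))
  · exact Subgroup.subset_closure (Or.inr rfl)
  · simpa using inv_mem (Subgroup.subset_closure
      (show g⁻¹ ∈ ({g⁻¹, y} : Set G) from Or.inl rfl))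
  · exact Subgroup.subset_closure (Or.inr rfl)

lemma cl_pair_mul_zpow (x y : G) (k : ℤ) :
    Subgroup.closure ({x * y ^ k, y} : Set G) = Subgroup.closure ({x, y} : Set G) := by
  apply le_antisymm <;> rw [Subgroup.closure_le] <;> rintro g (rfl | rfl)
  · exact mul_mem
      (Subgroup.subset_closure (show x ∈ ({x, y} : Set G) from Or.inl rfl))
      (zpow_mem (Subgroup.subset_closure (show y ∈ ({x, y} : Set G) from Or.inr rfl)) k)
  · exact Subgroup.subset_closure (Or.inr rfl)
  · simpa using mul_mem
      (Subgroup.subset_closure (show g * y ^ k ∈ ({g * y ^ k, y} : Set G) from Or.inl rfl))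
      (inv_mem (zpow_mem
        (Subgroup.subset_closure (show y ∈ ({g * y ^ k, y} : Set G) from Or.inr rfl)) k))
  · exact Subgroup.subset_closure (Or.inr rfl)

end Nielsen

lemma int_unit_of_closure (m : ℤ)
    (h : Subgroup.closure ({ofAdd m, (1 : Multiplicative ℤ)} : Set (Multiplicative ℤ)) = ⊤) :
    m = 1 ∨ m = -1 := by
  have h1 : (ofAdd (1 : ℤ)) ∈ Subgroup.closure ({ofAdd m, 1} : Set (Multiplicative ℤ)) := by
    rw [h]; trivial
  have h2 : (ofAdd (1 : ℤ)) ∈ Subgroup.zpowers (ofAdd m) := by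
    refine Subgroup.closure_le (Subgroup.zpowers (ofAdd m)) |>.mpr ?_ h1
    rintro g (rfl | rfl)
    · exact Subgroup.mem_zpowers _
    · exact one_mem _
  obtain ⟨k, hk⟩ := h2
  have hk' : ofAdd (k • m) = ofAdd (1 : ℤ) := by
    rw [ofAdd_zsmul]; exact hk
  have hkm : m * k = 1 := by
    have := ofAdd.injective hk'
    rw [smul_eq_mul] at this
    linarith [this]
  exact Int.isUnit_iff.mp (IsUnit.of_mul_eq_one (a := m) k hkm)

lemma base_case (A : GL2Z) (x y : GA A) (hn : toAdd (rightHom y) = 0)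
    (h : Subgroup.closure ({x, y} : Set (GA A)) = ⊤) :
    ∃ v : Fin 2 → ℤ,
      Submodule.span ℤ ({v, (A : Matrix (Fin 2) (Fin 2) ℤ).mulVec v} : Set (Fin 2 → ℤ)) = ⊤ := by
  have hy : rightHom y = 1 := by
    rw [← ofAdd_toAdd (rightHom y), hn]; rfl
  have hmap : Subgroup.closure ({ofAdd (toAdd (rightHom x)), (1 : Multiplicative ℤ)} :
      Set (Multiplicative ℤ)) = ⊤ := by
    have h1 := MonoidHom.map_closure (rightHom : GA A →* Multiplicative ℤ) ({x, y} : Set (GA A))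
    rw [h, Subgroup.map_top_of_surjective _ rightHom_surjective] at h1
    rw [ofAdd_toAdd, ← hy, ← Set.image_pair]
    exact h1.symm
  have hm := int_unit_of_closure _ hmap
  rcases hm with hm | hm
  · have hx : rightHom x = ofAdd (1 : ℤ) := by rw [← ofAdd_toAdd (rightHom x), hm]
    exact ⟨toAdd y.left, core A x y hx hy h⟩
  · have hx : rightHom x⁻¹ = ofAdd (1 : ℤ) := by
      rw [map_inv, ← ofAdd_toAdd (rightHom x), hm]; rfl
    have h' : Subgroup.closure ({x⁻¹, y} : Set (GA A)) = ⊤ := by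
      rw [cl_pair_inv, h]
    exact ⟨toAdd y.left, core A x⁻¹ y hx hy h'⟩

lemma main_aux (A : GL2Z) : ∀ (Nb : ℕ) (x y : GA A),
    (toAdd (rightHom y)).natAbs ≤ Nb →
    Subgroup.closure ({x, y} : Set (GA A)) = ⊤ →
    ∃ v : Fin 2 → ℤ,
      Submodule.span ℤ ({v, (A : Matrix (Fin 2) (Fin 2) ℤ).mulVec v} : Set (Fin 2 → ℤ)) = ⊤ := by
  intro Nb
  induction Nb with
  | zero =>
      intro x y hle h
      exact base_case A x y (by omega) h
  | succ N ih =>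
      intro x y hle h
      by_cases hn : toAdd (rightHom y) = 0
      · exact base_case A x y hn h
      · obtain ⟨m, hmdef⟩ : ∃ m, toAdd (rightHom x) = m := ⟨_, rfl⟩
        obtain ⟨n, hndef⟩ : ∃ n, toAdd (rightHom y) = n := ⟨_, rfl⟩
        rw [hndef] at hle hn
        refine ih y (x * y ^ (-(m / n))) ?_ ?_
        · have hr : toAdd (rightHom (x * y ^ (-(m / n)))) = m % n := by
            rw [_root_.map_mul, toAdd_mul, map_zpow, toAdd_zpow, smul_eq_mul, hmdef, hndef,
              Int.emod_def]
            ring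
          rw [hr]
          have h0 : 0 ≤ m % n := Int.emod_nonneg m hn
          have h1 : m % n < (n.natAbs : ℤ) := by
            rcases lt_or_gt_of_ne hn with hneg | hpos
            · have h2 : m % n = m % (-n) := by rw [Int.emod_neg]
              have h3 := Int.emod_lt_of_pos m (by omega : (0:ℤ) < -n)
              omega
            · have h3 := Int.emod_lt_of_pos m hpos
              omega
          omega
        · rw [cl_pair_swap, cl_pair_mul_zpow, h]

theorem GA_two_generated_iff (A : GL2Z) :
    (∃ x y : GA A, Subgroup.closure ({x, y} : Set (GA A)) = ⊤) ↔
    (∃ v : Fin 2 → ℤ,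
      Submodule.span ℤ ({v, (A : Matrix (Fin 2) (Fin 2) ℤ).mulVec v} : Set (Fin 2 → ℤ)) = ⊤) := by
  constructor
  · rintro ⟨x, y, h⟩
    exact main_aux A _ x y le_rfl h
  · rintro ⟨v, hv⟩
    refine ⟨inl (ofAdd v), inr (ofAdd (1 : ℤ)), ?_⟩
    set x : GA A := inl (ofAdd v) with hxdef
    set y : GA A := inr (ofAdd (1 : ℤ)) with hydef
    have hmem_y : ∀ k : ℤ, (inr (ofAdd k) : GA A) ∈ Subgroup.closure ({x, y} : Set (GA A)) := by
      intro k
      have : (inr (ofAdd k) : GA A) = y ^ k := by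
        rw [hydef, ← map_zpow, ofAdd_one_zpow]
      rw [this]
      exact zpow_mem (Subgroup.subset_closure
        (show y ∈ ({x, y} : Set (GA A)) from Or.inr rfl)) k
    have hT : ∀ u : Fin 2 → ℤ, (inl (ofAdd u) : GA A) ∈ Subgroup.closure ({x, y} : Set (GA A)) := by
      let T : Submodule ℤ (Fin 2 → ℤ) :=
      { carrier := {u | (inl (ofAdd u) : GA A) ∈ Subgroup.closure ({x, y} : Set (GA A))}
        zero_mem' := by
          show (inl (ofAdd (0 : Fin 2 → ℤ)) : GA A) ∈ Subgroup.closure ({x, y} : Set (GA A))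
          rw [show (ofAdd (0 : Fin 2 → ℤ)) = 1 from rfl, _root_.map_one]
          exact one_mem _
        add_mem' := by
          intro a b ha hb
          show (inl (ofAdd (a + b)) : GA A) ∈ Subgroup.closure ({x, y} : Set (GA A))
          rw [ofAdd_add, _root_.map_mul]
          exact mul_mem ha hb
        smul_mem' := by
          intro c u hu
          show (inl (ofAdd (c • u)) : GA A) ∈ Subgroup.closure ({x, y} : Set (GA A))
          rw [ofAdd_zsmul, map_zpow]
          exact zpow_mem hu c }
      have hsub : ({v, (A : Matrix (Fin 2) (Fin 2) ℤ).mulVec v} : Set (Fin 2 → ℤ)) ⊆ T := by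
        rintro u (rfl | rfl)
        · exact Subgroup.subset_closure (show x ∈ ({x, y} : Set (GA A)) from Or.inl rfl)
        · show (inl (ofAdd ((A : Matrix (Fin 2) (Fin 2) ℤ).mulVec v)) : GA A) ∈
            Subgroup.closure ({x, y} : Set (GA A))
          have heq : (inl (ofAdd ((A : Matrix (Fin 2) (Fin 2) ℤ).mulVec v)) : GA A)
              = y * x * y⁻¹ := by
            rw [show (ofAdd ((A : Matrix (Fin 2) (Fin 2) ℤ).mulVec v))
                = phiA A (ofAdd (1 : ℤ)) (ofAdd v) from by
              rw [phiA_apply, zpow_one, F_apply]]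
            rw [inl_aut]
            have hinvr : (inr ((ofAdd (1 : ℤ))⁻¹) : GA A) = y⁻¹ := by
              rw [hydef]; exact _root_.map_inv _ _
            rw [hinvr, hxdef, hydef]
          rw [heq]
          exact mul_mem (mul_mem
            (Subgroup.subset_closure (show y ∈ ({x, y} : Set (GA A)) from Or.inr rfl))
            (Subgroup.subset_closure (show x ∈ ({x, y} : Set (GA A)) from Or.inl rfl)))
            (inv_mem (Subgroup.subset_closure
              (show y ∈ ({x, y} : Set (GA A)) from Or.inr rfl)))
      intro u
      have : u ∈ T := by
        have hle := Submodule.span_le.mpr hsub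
        rw [hv] at hle
        exact hle trivial
      exact this
    rw [eq_top_iff]
    rintro g -
    rw [← inl_left_mul_inr_right g]
    refine mul_mem ?_ ?_
    · have := hT (toAdd g.left)
      rwa [ofAdd_toAdd] at this
    · have := hmem_y (toAdd g.right)
      rwa [ofAdd_toAdd] at this
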